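/- For the path P_n on n vertices, the minor of the generalized Laplacian obtained by deleting row 1 and column n equals ±1; consequently γ_P(P_n) = n − 1, i.e., I_i(P_n,X) = (1) for all 1 ≤ i ≤ n−1 while I_n(P_n,X) ≠ (1). -/

import Mathlib

open MvPolynomial Matrix

noncomputable def glap {P : Type} [CommRing P] {V : Type} [Fintype V] [DecidableEq V]
    (m : V → V → ℕ) : Matrix V V (MvPolynomial V P) :=
  Matrix.of fun u v => if u = v then X u else - (m u v : MvPolynomial V P)

noncomputable def critIdeal {P : Type} [CommRing P] {V : Type} [Fintype V] [DecidableEq V]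
    (m : V → V → ℕ) (i : ℕ) : Ideal (MvPolynomial V P) :=
  Ideal.span { p | ∃ r s : Fin i → V, Function.Injective r ∧ Function.Injective s ∧
    p = ((glap (P := P) m).submatrix r s).det }

/-- Arc multiplicities of the path on `k + 1` vertices `0, 1, …, k`. -/
def pathArcs (k : ℕ) : Fin (k + 1) → Fin (k + 1) → ℕ :=
  fun i j => if (i : ℕ) + 1 = j ∨ (j : ℕ) + 1 = i then 1 else 0

/-- The submatrix of the path's generalized Laplacian on rows `1,…,i` and columns
`0,…,i-1` is upper triangular with diagonal `-1`, so its determinant is `(-1)^i`. -/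
lemma path_minor_det {P : Type} [CommRing P] (k i : ℕ) (h : i ≤ k) :
    ((glap (P := P) (pathArcs k)).submatrix
      (fun a : Fin i => (⟨(a : ℕ) + 1, by omega⟩ : Fin (k + 1)))
      (fun b : Fin i => (⟨(b : ℕ), by omega⟩ : Fin (k + 1)))).det = (-1) ^ i := by
  have htri : ((glap (P := P) (pathArcs k)).submatrix
      (fun a : Fin i => (⟨(a : ℕ) + 1, by omega⟩ : Fin (k + 1)))
      (fun b : Fin i => (⟨(b : ℕ), by omega⟩ : Fin (k + 1)))).BlockTriangular id := by
    intro a b hba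
    simp only [id] at hba
    have h1 : ((⟨(a : ℕ) + 1, by omega⟩ : Fin (k + 1)) = ⟨(b : ℕ), by omega⟩) ↔ False := by
      simp [Fin.ext_iff]; omega
    have h2 : pathArcs k ⟨(a : ℕ) + 1, by omega⟩ ⟨(b : ℕ), by omega⟩ = 0 := by
      simp only [pathArcs, ite_eq_right_iff]
      intro hc; exfalso
      omega
    simp [glap, Matrix.submatrix_apply, h1, h2]
  rw [Matrix.det_of_upperTriangular htri]
  have hd : ∀ a : Fin i, ((glap (P := P) (pathArcs k)).submatrix
      (fun a : Fin i => (⟨(a : ℕ) + 1, by omega⟩ : Fin (k + 1)))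
      (fun b : Fin i => (⟨(b : ℕ), by omega⟩ : Fin (k + 1)))) a a = -1 := by
    intro a
    have h1 : ((⟨(a : ℕ) + 1, by omega⟩ : Fin (k + 1)) = ⟨(a : ℕ), by omega⟩) ↔ False := by
      simp [Fin.ext_iff]
    have h2 : pathArcs k ⟨(a : ℕ) + 1, by omega⟩ ⟨(a : ℕ), by omega⟩ = 1 := by
      simp [pathArcs]
    simp [glap, Matrix.submatrix_apply, h1, h2]
  calc (∏ a : Fin i, ((glap (P := P) (pathArcs k)).submatrix
        (fun a : Fin i => (⟨(a : ℕ) + 1, by omega⟩ : Fin (k + 1)))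
        (fun b : Fin i => (⟨(b : ℕ), by omega⟩ : Fin (k + 1)))) a a)
      = ∏ _a : Fin i, (-1 : MvPolynomial (Fin (k + 1)) P) :=
        Finset.prod_congr rfl fun a _ => hd a
    _ = (-1) ^ i := by simp

/-- The determinant of an `n × n` matrix over `R[t]` with diagonal `t` and constant
off-diagonal entries has `t^n`-coefficient `1`. -/
lemma coeff_det_diagX {R : Type} [CommRing R] {n : ℕ} (b : Fin n → Fin n → R) :
    (Matrix.det (Matrix.of fun u v : Fin n =>
      if u = v then (Polynomial.X : Polynomial R) else Polynomial.C (b u v))).coeff n = 1 := by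
  rw [Matrix.det_apply, Polynomial.finset_sum_coeff]
  have key : ∀ σ : Equiv.Perm (Fin n),
      ((Equiv.Perm.sign σ) • ∏ i, (Matrix.of fun u v : Fin n =>
        if u = v then (Polynomial.X : Polynomial R) else Polynomial.C (b u v)) (σ i) i).coeff n
      = if σ = 1 then 1 else 0 := by
    intro σ
    have hprod : (∏ i, (Matrix.of fun u v : Fin n =>
        if u = v then (Polynomial.X : Polynomial R) else Polynomial.C (b u v)) (σ i) i)
        = Polynomial.C (∏ i ∈ Finset.univ.filter fun i => ¬ σ i = i, b (σ i) i) *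
          (Polynomial.X : Polynomial R) ^ (Finset.univ.filter fun i => σ i = i).card := by
      simp only [Matrix.of_apply]
      rw [Finset.prod_ite, Finset.prod_const, map_prod, mul_comm]
    rw [Polynomial.coeff_smul, hprod, Polynomial.coeff_C_mul, Polynomial.coeff_X_pow]
    by_cases hσ : σ = 1
    · subst hσ
      have h1 : (Finset.univ.filter fun i : Fin n => (1 : Equiv.Perm (Fin n)) i = i) =
          Finset.univ := by simp
      have h2 : (Finset.univ.filter fun i : Fin n => ¬ (1 : Equiv.Perm (Fin n)) i = i) =
          (∅ : Finset (Fin n)) := by simp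
      simp [h1, h2]
    · have hcard : (Finset.univ.filter fun i => σ i = i).card < n := by
        obtain ⟨j, hj⟩ : ∃ j, σ j ≠ j := by
          by_contra hc
          push_neg at hc
          exact hσ (Equiv.ext hc)
        calc (Finset.univ.filter fun i => σ i = i).card
            < Finset.univ.card := Finset.card_lt_card
              ⟨Finset.filter_subset _ _, fun hsub => hj (by
                have := hsub (Finset.mem_univ j)
                simpa using this)⟩
          _ = n := by simp
      rw [if_neg hσ, if_neg (by omega)]
      simp
  rw [Finset.sum_congr rfl fun σ _ => key σ]
  simp

/-- Over a field, the determinant of the matrix with diagonal `t` and constant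
off-diagonal entries is not a unit (when `n ≥ 1`). -/
lemma not_isUnit_det_diagX {F : Type} [CommRing F] [IsDomain F] {n : ℕ} (hn : 0 < n) (b : Fin n → Fin n → F) :
    ¬ IsUnit (Matrix.det (Matrix.of fun u v : Fin n =>
      if u = v then (Polynomial.X : Polynomial F) else Polynomial.C (b u v))) := by
  intro h
  have hdeg := Polynomial.degree_eq_zero_of_isUnit h
  have hc : (Matrix.det (Matrix.of fun u v : Fin n =>
      if u = v then (Polynomial.X : Polynomial F) else Polynomial.C (b u v))).coeff n = 0 := by
    apply Polynomial.coeff_eq_zero_of_degree_lt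
    rw [hdeg]
    exact_mod_cast Nat.cast_pos.mpr hn
  rw [coeff_det_diagX] at hc
  exact one_ne_zero hc

/-- For the path `P_n` (`n = k + 1` vertices): the minor of `L(P_n,X)` obtained by deleting
the first row and the last column is `±1`; consequently `I_i(P_n,X) = (1)` for all
`1 ≤ i ≤ n − 1` while `I_n(P_n,X) ≠ (1)`, i.e. `γ_P(P_n) = n − 1`. -/
theorem gammaP_path (P : Type) [CommRing P] [Nontrivial P] (k : ℕ) :
    (((glap (P := P) (pathArcs k)).submatrix Fin.succ Fin.castSucc).det = 1 ∨
      ((glap (P := P) (pathArcs k)).submatrix Fin.succ Fin.castSucc).det = -1) ∧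
    (∀ i : ℕ, 1 ≤ i → i ≤ k → critIdeal (P := P) (pathArcs k) i = ⊤) ∧
    critIdeal (P := P) (pathArcs k) (k + 1) ≠ ⊤ := by
  refine ⟨?_, ?_, ?_⟩
  · -- the minor is ±1
    have heq : (glap (P := P) (pathArcs k)).submatrix Fin.succ Fin.castSucc =
        (glap (P := P) (pathArcs k)).submatrix
          (fun a : Fin k => (⟨(a : ℕ) + 1, by omega⟩ : Fin (k + 1)))
          (fun b : Fin k => (⟨(b : ℕ), by omega⟩ : Fin (k + 1))) := by
      ext a c
      simp [Matrix.submatrix_apply, Fin.succ, Fin.castSucc, Fin.castAdd, Fin.castLE]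
    rw [heq, path_minor_det k k le_rfl]
    exact neg_one_pow_eq_or _ k
  · -- trivial critical ideals
    intro i hi1 hik
    refine Ideal.eq_top_of_isUnit_mem _ (Ideal.subset_span
      ⟨(fun a : Fin i => (⟨(a : ℕ) + 1, by omega⟩ : Fin (k + 1))),
       (fun b : Fin i => (⟨(b : ℕ), by omega⟩ : Fin (k + 1))), ?_, ?_, rfl⟩) ?_
    · intro a b hab
      apply Fin.ext
      have := congrArg Fin.val hab
      simpa using this
    · intro a b hab
      apply Fin.ext
      have := congrArg Fin.val hab
      simpa using this
    · rw [path_minor_det k i hik]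
      exact (isUnit_one.neg).pow i
  · -- the full critical ideal is not trivial
    intro htop
    set d : MvPolynomial (Fin (k + 1)) P := (glap (P := P) (pathArcs k)).det with hd
    -- all generators are unit multiples of d
    have hle : critIdeal (P := P) (pathArcs k) (k + 1) ≤ Ideal.span {d} := by
      rw [critIdeal, Ideal.span_le]
      rintro p ⟨r, s, hr, hs, rfl⟩
      have hrb : Function.Bijective r := (Finite.injective_iff_bijective).mp hr
      have hsb : Function.Bijective s := (Finite.injective_iff_bijective).mp hs
      set e := Equiv.ofBijective r hrb with he
      set f := Equiv.ofBijective s hsb with hf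
      have hsub : (glap (P := P) (pathArcs k)).submatrix r s =
          (((glap (P := P) (pathArcs k)).submatrix f f).submatrix (e.trans f.symm) id) := by
        ext a c : 1
        simp [Matrix.submatrix_apply, he, hf, Equiv.ofBijective_apply, Equiv.ofBijective_apply_symm_apply]
      rw [SetLike.mem_coe, Ideal.mem_span_singleton, hsub, Matrix.det_permute,
        Matrix.det_submatrix_equiv_self]
      exact Dvd.dvd.mul_left dvd_rfl _
    have hspan : Ideal.span {d} = ⊤ := eq_top_iff.mpr (htop ▸ hle)
    have hunit : IsUnit d := Ideal.span_singleton_eq_top.mp hspan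
    -- map to polynomials over the residue field
    obtain ⟨m, hm⟩ := Ideal.exists_maximal P
    haveI := hm
    set ψ : MvPolynomial (Fin (k + 1)) P →+* Polynomial (P ⧸ m) :=
      (MvPolynomial.eval₂Hom (Polynomial.C.comp (Ideal.Quotient.mk m)) fun _ => Polynomial.X)
      with hψ
    have hunit' : IsUnit (ψ d) := hunit.map ψ
    have hmap : ψ d = Matrix.det (Matrix.of fun u v : Fin (k + 1) =>
        if u = v then (Polynomial.X : Polynomial (P ⧸ m))
        else Polynomial.C (-(pathArcs k u v : P ⧸ m))) := by
      rw [hd, RingHom.map_det]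
      congr 1
      ext u v
      by_cases huv : u = v
      · simp [RingHom.mapMatrix_apply, glap, huv, hψ]
      · simp only [RingHom.mapMatrix_apply, Matrix.map_apply, Matrix.of_apply, glap, huv,
          if_false]
        rw [map_neg, map_natCast, map_neg, Polynomial.C_eq_natCast]
    rw [hmap] at hunit'
    exact not_isUnit_det_diagX (Nat.succ_pos k) _ hunit'
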